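/- Let F : ℝ → ℂ be three times continuously differentiable with compact support, and define G(u) = ∫_u^∞ F(v) dv for u ≥ 0, and F̂(z) = ∫_ℝ F(u) e^{2πizu} du for z ∈ ℂ (an entire function). Let q ≥ 1, let χ be a Dirichlet character modulo q with L(s,χ) its Dirichlet L-function, let x > 1, s ∈ ℂ, and c > max{1 − Re s, 0}. Then ∑_{n ≥ 1} χ(n) n^{−s} G(log n / log x) = (1/2πi) ∫_{Re w = c} L(s+w, χ) F̂(−iw log x / (2π)) dw/w, where the sum on the left has only finitely many nonzero terms and the contour integral along the vertical line Re w = c converges absolutely. -/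

import Mathlib

open Complex
open scoped Real

noncomputable section

open Complex MeasureTheory Set FourierTransform Real
open scoped Real



-- decay bound for Fourier transform of C³ compactly supported function
lemma my_fourier_decay (f : ℝ → ℂ) (hf : ContDiff ℝ 3 f) (hsupp : HasCompactSupport f) :
    ∃ C : ℝ, ∀ ξ : ℝ, ‖𝓕 f ξ‖ ≤ C / (1 + ξ ^ 2) := by
  have hint : ∀ n : ℕ, (n : ℕ∞) ≤ 3 → Integrable (iteratedDeriv n f) := by
    intro n hn
    have hc : Continuous (iteratedDeriv n f) := by
      apply hf.continuous_iteratedDeriv n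
      exact_mod_cast le_trans (by exact_mod_cast hn) le_rfl
    have hs : HasCompactSupport (iteratedDeriv n f) := by
      apply hsupp.mono'
      intro x hx
      simp only [Function.mem_support, iteratedDeriv_eq_iteratedFDeriv] at hx
      have : iteratedFDeriv ℝ n f x ≠ 0 := fun h => hx (by simp [h])
      exact tsupport_iteratedFDeriv_subset n (subset_closure this)
    exact hc.integrable_of_hasCompactSupport hs
  have key : 𝓕 (iteratedDeriv 2 f) =
      fun (ξ : ℝ) ↦ (2 * π * I * ξ) ^ 2 • (𝓕 f ξ) :=
    Real.fourier_iteratedDeriv (N := 3) (by exact_mod_cast hf) hint (by norm_num)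
  set B := ∫ v : ℝ, ‖f v‖ with hB
  set D := ∫ v : ℝ, ‖iteratedDeriv 2 f v‖ with hD
  refine ⟨B + D / (2 * π) ^ 2, fun ξ => ?_⟩
  have h1 : ‖𝓕 f ξ‖ ≤ B :=
    VectorFourier.norm_fourierIntegral_le_integral_norm _ _ _ _ _
  have h2 : ‖𝓕 (iteratedDeriv 2 f) ξ‖ ≤ D :=
    VectorFourier.norm_fourierIntegral_le_integral_norm _ _ _ _ _
  have h3 : ‖𝓕 (iteratedDeriv 2 f) ξ‖ = (2 * π) ^ 2 * ξ ^ 2 * ‖𝓕 f ξ‖ := by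
    rw [key]
    simp only [norm_smul, norm_pow, norm_mul, Complex.norm_I, Complex.norm_real,
      Real.norm_eq_abs, Complex.norm_ofNat, _root_.abs_of_nonneg Real.pi_pos.le, mul_one]
    rw [mul_pow, mul_pow, _root_.sq_abs]
  have hco : (0:ℝ) < 1 + ξ ^ 2 := by positivity
  rw [le_div_iff₀ hco]
  have hpi : (0:ℝ) < (2 * π) ^ 2 := by positivity
  have h4 : ξ ^ 2 * ‖𝓕 f ξ‖ ≤ D / (2 * π) ^ 2 := by
    rw [le_div_iff₀ hpi]
    nlinarith [h3, h2]
  nlinarith [h1, h4, norm_nonneg (𝓕 f ξ), sq_nonneg ξ, hpi]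

lemma my_fourier_continuous (f : ℝ → ℂ) (hf : Integrable f) : Continuous (𝓕 f) :=
  VectorFourier.fourierIntegral_continuous Real.continuous_fourierChar
    (by exact continuous_inner) hf

lemma my_fourier_integrable (f : ℝ → ℂ) (hf : ContDiff ℝ 3 f) (hsupp : HasCompactSupport f) :
    Integrable (𝓕 f) := by
  obtain ⟨C, hC⟩ := my_fourier_decay f hf hsupp
  have hCnn : 0 ≤ C := by
    have := (norm_nonneg (𝓕 f 0)).trans (hC 0)
    simp at this
    linarith
  refine Integrable.mono' ((integrable_inv_one_add_sq).const_mul C) ?_ ?_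
  · exact (my_fourier_continuous f
      ((hf.continuous).integrable_of_hasCompactSupport hsupp)).aestronglyMeasurable
  · filter_upwards with ξ
    simpa [div_eq_mul_inv] using hC ξ

lemma my_integral_cexp_Ioi (w : ℂ) (hw : 0 < w.re) (y : ℝ) :
    ∫ r in Ioi y, Complex.exp (-(w * r)) = Complex.exp (-(w * y)) / w := by
  have hw0 : w ≠ 0 := fun h => by simp [h] at hw
  have hi : IntegrableOn (fun r : ℝ => Complex.exp (-(w * r))) (Ioi y) := by
    refine Integrable.mono' (exp_neg_integrableOn_Ioi y hw) ?_ ?_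
    · exact (Complex.continuous_exp.comp (by continuity)).aestronglyMeasurable
    · filter_upwards with r
      rw [Complex.norm_exp]
      simp [mul_comm]
  have hderiv : ∀ r ∈ Ici y, HasDerivAt (fun r : ℝ => -Complex.exp (-(w * r)) / w)
      (Complex.exp (-(w * r))) r := by
    intro r _
    have h1 : HasDerivAt (fun r : ℝ => -(w * r)) (-w) r := by
      have h := ((Complex.ofRealCLM.hasDerivAt (x := r)).const_mul w).neg
      simp at h
      exact h
    have h2 := (h1.cexp).neg.div_const w
    convert h2 using 1
    · rfl
    case e'_8 => rfl
    case e'_9 => rw [mul_neg, neg_neg, mul_div_cancel_right₀ _ hw0]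
  have htend : Filter.Tendsto (fun r : ℝ => -Complex.exp (-(w * r)) / w)
      Filter.atTop (nhds 0) := by
    rw [show (0:ℂ) = -0/w by simp]
    apply Filter.Tendsto.div_const
    apply Filter.Tendsto.neg
    rw [show nhds (0:ℂ) = nhds 0 from rfl]
    apply tendsto_zero_iff_norm_tendsto_zero.mpr
    have heq : ∀ r : ℝ, ‖Complex.exp (-(w * r))‖ = Real.exp (-(w.re * r)) := by
      intro r; rw [Complex.norm_exp]; congr 1; simp
    simp_rw [heq]
    exact Real.tendsto_exp_atBot.comp
      (Filter.tendsto_neg_atBot_iff.mpr (Filter.Tendsto.const_mul_atTop hw Filter.tendsto_id))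
  have := MeasureTheory.integral_Ioi_of_hasDerivAt_of_tendsto
    ((hderiv y (self_mem_Ici)).continuousAt.continuousWithinAt)
    (fun r hr => hderiv r (Set.mem_Ici.mpr (le_of_lt hr))) hi htend
  rw [this]
  ring




lemma my_perron (H : ℝ → ℂ) (hH : Continuous H) (hHi : Integrable H) (hHf : Integrable (𝓕 H))
    (c lam : ℝ) (hc : 0 < c) (hlam : 0 < lam) (y : ℝ) :
    ∫ t : ℝ, Complex.exp (-((c + t * I) * y)) * 𝓕 H (-(t * lam) / (2 * π)) / (c + t * I)
      = (2 * π / lam : ℝ) • ∫ r in Ioi y, Complex.exp (-((c : ℂ) * r)) * H (r / lam) := by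
  have hπ : (0:ℝ) < π := Real.pi_pos
  have hwre : ∀ t : ℝ, ((c : ℂ) + t * I).re = c := by intro t; simp
  have hwpos : ∀ t : ℝ, 0 < ((c : ℂ) + t * I).re := fun t => by rw [hwre]; exact hc
  have ha : (-lam / (2 * π)) ≠ 0 := by
    apply div_ne_zero (by linarith) (by positivity)
  -- step 1 : rewrite each integrand as an r-integral
  have step1 : ∀ t : ℝ,
      Complex.exp (-(((c : ℂ) + t * I) * y)) * 𝓕 H (-(t * lam) / (2 * π)) / ((c : ℂ) + t * I)
      = ∫ r in Ioi y, 𝓕 H ((-lam / (2 * π)) * t) * Complex.exp (-(((c : ℂ) + t * I) * r)) := by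
    intro t
    rw [integral_const_mul, my_integral_cexp_Ioi _ (hwpos t) y]
    rw [show (-lam / (2 * π)) * t = -(t * lam) / (2 * π) by ring]
    ring
  simp_rw [step1]
  -- step 2 : swap the integrals
  rw [integral_integral_swap]
  · -- step 3 : evaluate the inner t-integral via Fourier inversion
    have step3 : ∀ r : ℝ,
        (∫ t : ℝ, 𝓕 H ((-lam / (2 * π)) * t) * Complex.exp (-(((c : ℂ) + t * I) * r)))
        = Complex.exp (-((c:ℂ) * r)) * ((2 * π / lam : ℝ) • H (r / lam)) := by
      intro r
      have hsplit : ∀ t : ℝ,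
          𝓕 H ((-lam / (2 * π)) * t) * Complex.exp (-(((c : ℂ) + t * I) * r))
          = Complex.exp (-((c:ℂ) * r)) *
            ((fun ξ : ℝ => Complex.exp (((-2 * π * ξ * (-(r/lam))) : ℝ) * I) • 𝓕 H ξ)
              ((-lam / (2 * π)) * t)) := by
        intro t
        simp only [smul_eq_mul]
        have hexp : Complex.exp (-(((c : ℂ) + t * I) * r))
            = Complex.exp (((-2 * π * ((-lam / (2 * π)) * t) * (-(r/lam))) : ℝ) * I) *
              Complex.exp (-((c:ℂ) * r)) := by
          rw [← Complex.exp_add]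
          congr 1
          have h1 : ((-2 * π * (-lam / (2 * π) * t) * -(r / lam)) : ℝ) = -(t * r) := by
            field_simp
          rw [h1]
          push_cast
          simp only [Complex.ext_iff, Complex.add_re, Complex.add_im, Complex.mul_re,
            Complex.mul_im, Complex.I_re, Complex.I_im, Complex.neg_re, Complex.neg_im,
            Complex.ofReal_re, Complex.ofReal_im]
          constructor <;> ring
        rw [hexp]; ring
      simp_rw [hsplit]
      rw [integral_const_mul]
      congr 1
      rw [MeasureTheory.Measure.integral_comp_mul_left
        (fun ξ : ℝ => Complex.exp (((-2 * π * ξ * (-(r/lam))) : ℝ) * I) • 𝓕 H ξ)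
        (-lam / (2 * π))]
      have hinv : (∫ ξ : ℝ, Complex.exp (((-2 * π * ξ * (-(r/lam))) : ℝ) * I) • 𝓕 H ξ)
          = H (r / lam) := by
        rw [← Real.fourier_real_eq_integral_exp_smul (𝓕 H) (-(r/lam))]
        rw [← Real.fourierInv_eq_fourier_neg]
        rw [hH.fourierInv_fourier_eq hHi hHf]
      rw [hinv]
      congr 1
      rw [abs_inv, abs_div, abs_neg, abs_of_pos hlam, abs_of_pos (by positivity : (0:ℝ) < 2*π),
        inv_div]
    simp_rw [step3]
    simp_rw [mul_smul_comm]
    rw [integral_smul]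
  · -- integrability on the product space
    have hφ : Integrable (fun t : ℝ => 𝓕 H ((-lam / (2 * π)) * t)) :=
      hHf.comp_mul_left' ha
    have hcont : Continuous (Function.uncurry fun (t r : ℝ) =>
        𝓕 H ((-lam / (2 * π)) * t) * Complex.exp (-(((c : ℂ) + t * I) * r))) := by
      apply Continuous.mul
      · exact (my_fourier_continuous H hHi).comp (continuous_const.mul continuous_id) |>.comp
          continuous_fst
      · apply Complex.continuous_exp.comp
        apply Continuous.neg
        apply Continuous.mul
        · exact (continuous_const.add ((Complex.continuous_ofReal.comp continuous_fst).mul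
            continuous_const))
        · exact Complex.continuous_ofReal.comp continuous_snd
    apply Integrable.mono' (g := fun p : ℝ × ℝ => ‖𝓕 H ((-lam / (2 * π)) * p.1)‖ *
      Real.exp (-(c * p.2)))
    · have hψ : IntegrableOn (fun r : ℝ => Real.exp (-(c * r))) (Ioi y) := by
        simpa [neg_mul] using exp_neg_integrableOn_Ioi y hc
      exact hφ.norm.mul_prod hψ
    · exact hcont.aestronglyMeasurable
    · filter_upwards with p
      rw [Function.uncurry]
      rw [norm_mul]
      apply mul_le_mul_of_nonneg_left _ (norm_nonneg _)
      rw [Complex.norm_exp]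
      apply le_of_eq
      congr 1
      simp [mul_comm]





/-- **Lemma (smoothed Perron formula).** For a compactly supported `C³` function `F`,
`G(u) = ∫_u^∞ F`, and a Dirichlet character `χ` mod `q`, the smoothed Dirichlet series
`∑ χ(n) n^{-s} G(log n / log x)` equals a vertical-line integral of `L(s+w,χ)` against
the Fourier transform of `F`. -/
theorem smoothed_series_eq_contour_integral
    (F : ℝ → ℂ) (hF : ContDiff ℝ 3 F) (hFsupp : HasCompactSupport F)
    (G : ℝ → ℂ) (hG : ∀ u : ℝ, G u = ∫ v in Set.Ioi u, F v)
    (Fhat : ℂ → ℂ)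
    (hFhat : ∀ z : ℂ, Fhat z = ∫ u : ℝ, F u * Complex.exp (2 * (π : ℂ) * I * z * u))
    (q : ℕ) (hq : 1 ≤ q) (χ : DirichletCharacter ℂ q)
    (x : ℝ) (hx : 1 < x) (s : ℂ) (c : ℝ) (hc : max (1 - s.re) 0 < c) :
    (Function.support (fun n : ℕ =>
      if 1 ≤ n then χ ((n : ZMod q)) * (n : ℂ) ^ (-s) * G (Real.log n / Real.log x)
      else 0)).Finite ∧
    MeasureTheory.Integrable (fun t : ℝ =>
      (@DirichletCharacter.LFunction q ⟨by omega⟩ χ (s + c + t * I)) *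
        Fhat (-(I * (c + t * I)) * Real.log x / (2 * π)) / (c + t * I)) ∧
    (∑' n : ℕ,
      if 1 ≤ n then χ ((n : ZMod q)) * (n : ℂ) ^ (-s) * G (Real.log n / Real.log x)
      else 0) =
    (1 / (2 * (π : ℂ))) * ∫ t : ℝ,
      (@DirichletCharacter.LFunction q ⟨by omega⟩ χ (s + c + t * I)) *
        Fhat (-(I * (c + t * I)) * Real.log x / (2 * π)) / (c + t * I) := by
  haveI : NeZero q := ⟨by omega⟩
  have hπ : (0:ℝ) < π := Real.pi_pos
  have hcpos : 0 < c := lt_of_le_of_lt (le_max_right _ _) hc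
  have hσ : 1 < s.re + c := by
    have := lt_of_le_of_lt (le_max_left (1 - s.re) 0) hc; linarith
  set lam := Real.log x with hlamdef
  have hlam : 0 < lam := Real.log_pos hx
  -- the auxiliary function H
  set H : ℝ → ℂ := fun u => Complex.exp ((c * lam * u : ℝ)) * F u with hHdef
  have hH3 : ContDiff ℝ 3 H := by
    apply ContDiff.mul _ hF
    exact (Complex.ofRealCLM.contDiff.comp ((contDiff_const.mul contDiff_id))).cexp
  have hHsupp : HasCompactSupport H := hFsupp.mul_left
  have hHcont : Continuous H := hH3.continuous
  have hHi : Integrable H := hHcont.integrable_of_hasCompactSupport hHsupp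
  have hHf : Integrable (𝓕 H) := my_fourier_integrable H hH3 hHsupp
  -- relation between Fhat and the Fourier transform of H
  have hHhat : ∀ t : ℝ, Fhat (-(I * (c + t * I)) * lam / (2 * π))
      = 𝓕 H (-(t * lam) / (2 * π)) := by
    intro t
    rw [hFhat, Real.fourier_real_eq_integral_exp_smul]
    congr 1
    ext u
    rw [smul_eq_mul, hHdef]
    have harg : (2 * (π:ℂ) * I * (-(I * (c + t * I)) * lam / (2 * π)) * u)
        = ((-2 * π * u * (-(t * lam) / (2 * π)) : ℝ) : ℂ) * I + ((c * lam * u : ℝ) : ℂ) := by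
      push_cast
      have h2π : ((2:ℂ) * π) ≠ 0 := by
        simp [Complex.ofReal_ne_zero.mpr Real.pi_ne_zero]
      field_simp
      ring_nf
      simp only [show (I:ℂ)^3 = -I by rw [pow_succ, Complex.I_sq]; ring, Complex.I_sq]
      ring
    rw [harg, Complex.exp_add]
    ring
  -- key per-n identity
  have key : ∀ n : ℕ, 1 ≤ n →
      (∫ t : ℝ, (n:ℂ) ^ (-((c:ℂ) + t * I)) * 𝓕 H (-(t * lam) / (2 * π)) / ((c:ℂ) + t * I))
      = ((2 * π : ℝ) : ℂ) * G (Real.log n / lam) := by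
    intro n hn
    have hn0 : (0:ℝ) < n := by exact_mod_cast hn
    have hcpow : ∀ t : ℝ, (n:ℂ) ^ (-((c:ℂ) + t * I))
        = Complex.exp (-(((c:ℂ) + t * I) * ((Real.log n : ℝ) : ℂ))) := by
      intro t
      rw [Complex.cpow_def_of_ne_zero (by exact_mod_cast hn0.ne' : (n:ℂ) ≠ 0)]
      congr 1
      rw [show ((n:ℂ)) = ((n:ℝ):ℂ) by push_cast; rfl, ← Complex.ofReal_log hn0.le]
      ring
    simp_rw [hcpow]
    rw [my_perron H hHcont hHi hHf c lam hcpos hlam (Real.log n)]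
    have hint : ∀ r : ℝ, Complex.exp (-((c:ℂ) * r)) * H (r / lam) = F (r / lam) := by
      intro r
      rw [hHdef]
      simp only
      rw [← mul_assoc, ← Complex.exp_add]
      have h0 : -((c:ℂ) * r) + ((c * lam * (r / lam) : ℝ) : ℂ) = 0 := by
        push_cast
        have : (lam : ℂ) ≠ 0 := Complex.ofReal_ne_zero.mpr hlam.ne'
        field_simp
        ring
      rw [h0, Complex.exp_zero, one_mul]
    simp_rw [hint]
    have hchg : (∫ r in Ioi (Real.log n), F (r / lam))
        = lam • ∫ u in Ioi (Real.log n / lam), F u := by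
      simp_rw [div_eq_inv_mul]
      rw [MeasureTheory.integral_comp_mul_left_Ioi F (Real.log n) (inv_pos.mpr hlam), inv_inv]
    rw [hchg, ← hG, smul_smul, div_mul_cancel₀ _ hlam.ne']
    rw [Complex.real_smul]
  -- the Fourier-side integrand
  set Φ : ℝ → ℂ := fun t => 𝓕 H (-(t * lam) / (2 * π)) with hΦdef
  have hΦform : (fun t : ℝ => 𝓕 H ((-lam / (2 * π)) * t)) = Φ := by
    funext t; rw [hΦdef]; congr 1; ring
  have hΦi : Integrable Φ := by
    rw [← hΦform]
    exact hHf.comp_mul_left' (div_ne_zero (by linarith) (by positivity))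
  have hΦc : Continuous Φ := (my_fourier_continuous H hHi).comp (by fun_prop)
  have hwne : ∀ t : ℝ, ((c:ℂ) + t * I) ≠ 0 := by
    intro t h
    have h2 : ((c:ℂ) + t * I).re = 0 := by rw [h]; simp
    simp at h2; linarith
  have hwnorm : ∀ t : ℝ, (c:ℝ) ≤ ‖(c:ℂ) + t * I‖ := by
    intro t
    have h1 := Complex.abs_re_le_norm ((c:ℂ) + t * I)
    have h2 : ((c:ℂ) + t * I).re = c := by simp
    rw [h2] at h1
    exact (le_abs_self c).trans h1
  have hwcont : Continuous (fun t : ℝ => (c:ℂ) + t * I) := by fun_prop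
  have hΨi : Integrable (fun t : ℝ => Φ t / ((c:ℂ) + t * I)) := by
    apply Integrable.mono' (hΦi.norm.mul_const c⁻¹)
    · exact (hΦc.div hwcont hwne).aestronglyMeasurable
    · filter_upwards with t
      rw [norm_div, div_eq_mul_inv]
      apply mul_le_mul_of_nonneg_left _ (norm_nonneg _)
      exact inv_anti₀ hcpos (hwnorm t)
  -- bound on the L-function on the vertical line
  have hLre : ∀ t : ℝ, (s + c + t * I).re = s.re + c := by intro t; simp
  set M := ∑' n : ℕ, (n:ℝ) ^ (-(s.re + c)) with hM
  have hMsum : Summable (fun n : ℕ => (n:ℝ) ^ (-(s.re + c))) :=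
    Real.summable_nat_rpow.mpr (by linarith)
  have hterm : ∀ (z : ℂ), z.re = s.re + c → ∀ n : ℕ,
      ‖LSeries.term (fun m : ℕ => χ m) z n‖ ≤ (n:ℝ) ^ (-(s.re + c)) := by
    intro z hz n
    rcases Nat.eq_zero_or_pos n with h | h
    · subst h
      simp only [LSeries.term_zero, norm_zero, Nat.cast_zero]
      rw [Real.zero_rpow (by linarith : -(s.re + c) ≠ 0)]
    · rw [LSeries.term_of_ne_zero h.ne']
      rw [norm_div, Complex.norm_natCast_cpow_of_pos h, hz]
      rw [Real.rpow_neg (Nat.cast_nonneg n), div_eq_mul_inv]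
      exact mul_le_of_le_one_left (by positivity) (χ.norm_le_one _)
  have htermsum : ∀ (z : ℂ), z.re = s.re + c →
      Summable (fun n : ℕ => ‖LSeries.term (fun m : ℕ => χ m) z n‖) := by
    intro z hz
    exact Summable.of_nonneg_of_le (fun n => norm_nonneg _) (hterm z hz) hMsum
  have hLbound : ∀ t : ℝ, ‖DirichletCharacter.LFunction χ (s + c + t * I)‖ ≤ M := by
    intro t
    rw [DirichletCharacter.LFunction_eq_LSeries χ (by rw [hLre]; linarith)]
    calc ‖LSeries (fun m : ℕ => χ m) (s + c + t * I)‖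
        ≤ ∑' n : ℕ, ‖LSeries.term (fun m : ℕ => χ m) (s + c + t * I) n‖ :=
          norm_tsum_le_tsum_norm (htermsum _ (hLre t))
      _ ≤ M := (htermsum _ (hLre t)).tsum_le_tsum (hterm _ (hLre t)) hMsum
  -- continuity of the L-function along the line
  have hLne1 : ∀ t : ℝ, s + c + t * I ≠ 1 := by
    intro t h
    have := congrArg Complex.re h
    rw [hLre t] at this
    simp at this; linarith
  have hLcont : Continuous (fun t : ℝ => DirichletCharacter.LFunction χ (s + c + t * I)) := by
    rw [continuous_iff_continuousAt]
    intro t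
    exact ContinuousAt.comp ((DirichletCharacter.differentiableAt_LFunction χ _
      (Or.inl (hLne1 t))).continuousAt) (by fun_prop : ContinuousAt (fun t : ℝ => s + c + t * I) t)
  -- the summand functions for the exchanged sum/integral
  set g : ℕ → ℝ → ℂ := fun n t =>
    (if 1 ≤ n then χ (n : ZMod q) * (n:ℂ) ^ (-(s + c + t * I)) else 0)
      * (Φ t / ((c:ℂ) + t * I)) with hgdef
  have hnormfst : ∀ (n : ℕ) (t : ℝ),
      ‖if 1 ≤ n then χ (n : ZMod q) * (n:ℂ) ^ (-(s + c + t * I)) else 0‖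
        ≤ (n:ℝ) ^ (-(s.re + c)) := by
    intro n t
    rcases Nat.eq_zero_or_pos n with h | h
    · subst h
      simp only [Nat.cast_zero]
      rw [if_neg (by norm_num), Real.zero_rpow (by linarith : -(s.re + c) ≠ 0)]
      simp
    · have h1 : 1 ≤ n := h
      rw [if_pos h1, norm_mul, Complex.norm_natCast_cpow_of_pos h]
      have hre : (-(s + c + t * I)).re = -(s.re + c) := by simp
      rw [hre]
      exact mul_le_of_le_one_left (Real.rpow_nonneg (Nat.cast_nonneg n) _) (χ.norm_le_one _)
  have hgnorm : ∀ (n : ℕ) (t : ℝ),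
      ‖g n t‖ ≤ (n:ℝ) ^ (-(s.re + c)) * ‖Φ t / ((c:ℂ) + t * I)‖ := by
    intro n t
    rw [hgdef]
    simp only
    rw [norm_mul]
    exact mul_le_mul_of_nonneg_right (hnormfst n t) (norm_nonneg _)
  have hgcont : ∀ n : ℕ, Continuous (g n) := by
    intro n
    rcases Nat.eq_zero_or_pos n with h | h
    · subst h
      simp only [hgdef, if_neg (by norm_num : ¬ (1:ℕ) ≤ 0), zero_mul]
      exact continuous_const
    · have hn0 : ((n:ℂ)) ≠ 0 := by
        exact_mod_cast (Nat.cast_pos.mpr h).ne'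
      have h1 : 1 ≤ n := h
      simp only [hgdef, h1, if_true]
      apply Continuous.mul
      · exact continuous_const.mul
          ((by fun_prop : Continuous fun t : ℝ => -(s + c + t * I)).const_cpow (Or.inl hn0))
      · exact hΦc.div hwcont hwne
  have hgint : ∀ n : ℕ, Integrable (g n) := by
    intro n
    apply Integrable.mono' (hΨi.norm.const_mul ((n:ℝ) ^ (-(s.re + c))))
    · exact (hgcont n).aestronglyMeasurable
    · filter_upwards with t
      exact hgnorm n t
  have hgsum : Summable (fun n : ℕ => ∫ t : ℝ, ‖g n t‖) := by
    apply Summable.of_nonneg_of_le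
      (fun n => integral_nonneg (fun t => norm_nonneg _))
      (fun n => ?_) (hMsum.mul_right (∫ t : ℝ, ‖Φ t / ((c:ℂ) + t * I)‖))
    calc (∫ t : ℝ, ‖g n t‖)
        ≤ ∫ t : ℝ, (n:ℝ) ^ (-(s.re + c)) * ‖Φ t / ((c:ℂ) + t * I)‖ :=
          integral_mono (hgint n).norm (hΨi.norm.const_mul _) (hgnorm n)
      _ = (n:ℝ) ^ (-(s.re + c)) * ∫ t : ℝ, ‖Φ t / ((c:ℂ) + t * I)‖ := integral_const_mul _ _
  -- per-n reduction of the smoothed coefficient to an integral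
  have hA : ∀ n : ℕ,
      (if 1 ≤ n then χ (n : ZMod q) * (n:ℂ) ^ (-s) * G (Real.log n / lam) else 0)
      = (1 / (2 * (π:ℂ))) * ∫ t : ℝ, g n t := by
    intro n
    by_cases hn : 1 ≤ n
    · rw [if_pos hn]
      have hn0 : ((n:ℂ)) ≠ 0 := Nat.cast_ne_zero.mpr (by omega)
      have hsplit : ∀ t : ℝ, g n t
          = (χ (n : ZMod q) * (n:ℂ) ^ (-s)) *
            ((n:ℂ) ^ (-((c:ℂ) + t * I)) * Φ t / ((c:ℂ) + t * I)) := by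
        intro t
        rw [hgdef]
        simp only [hn, if_true]
        rw [show -(s + ↑c + ↑t * I) = (-s) + (-((c:ℂ) + t * I)) by ring,
          Complex.cpow_add _ _ hn0]
        ring
      simp_rw [hsplit]
      rw [integral_const_mul, key n hn]
      have h2π : ((2 * π : ℝ) : ℂ) ≠ 0 := by
        push_cast
        simp [Complex.ofReal_ne_zero.mpr Real.pi_ne_zero]
      push_cast at h2π ⊢
      field_simp
    · rw [if_neg hn]
      have hz : ∀ t : ℝ, g n t = 0 := by
        intro t; rw [hgdef]; simp only [if_neg hn, zero_mul]
      simp_rw [hz]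
      simp
  -- pointwise identification of the sum with the L-function
  have hpt : ∀ t : ℝ, (∑' n : ℕ, g n t)
      = DirichletCharacter.LFunction χ (s + c + t * I) * Φ t / ((c:ℂ) + t * I) := by
    intro t
    rw [hgdef]
    simp only
    rw [tsum_mul_right, mul_div_assoc]
    congr 1
    rw [DirichletCharacter.LFunction_eq_LSeries χ (by rw [hLre]; linarith), LSeries]
    apply tsum_congr
    intro n
    rcases Nat.eq_zero_or_pos n with h | h
    · subst h
      simp [LSeries.term_zero]
    · have h1 : 1 ≤ n := h
      rw [if_pos h1, LSeries.term_of_ne_zero (by omega : n ≠ 0), Complex.cpow_neg,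
        div_eq_mul_inv]
  -- Goal 1 : finiteness of the support
  have goal1 : (Function.support (fun n : ℕ =>
      if 1 ≤ n then χ ((n : ZMod q)) * (n : ℂ) ^ (-s) * G (Real.log n / lam)
      else 0)).Finite := by
    obtain ⟨R, hR⟩ := (Metric.isBounded_iff_subset_closedBall 0).mp
      hFsupp.isCompact.isBounded
    set R' := |R| + 1 with hR'def
    have hFzero : ∀ v : ℝ, R' ≤ v → F v = 0 := by
      intro v hv
      apply image_eq_zero_of_notMem_tsupport
      intro hmem
      have := hR hmem
      rw [Metric.mem_closedBall, Real.dist_eq, sub_zero] at this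
      have h1 : |R| + 1 ≤ v := hv
      have h2 : v ≤ |v| := le_abs_self v
      have h3 : |R| ≤ R ∨ R ≤ |R| := Or.inr (le_abs_self R)
      nlinarith [le_abs_self R, abs_nonneg R]
    have hGzero : ∀ u : ℝ, R' ≤ u → G u = 0 := by
      intro u hu
      rw [hG u]
      apply setIntegral_eq_zero_of_forall_eq_zero
      intro v hv
      exact hFzero v (le_of_lt (lt_of_le_of_lt hu hv))
    apply Set.Finite.subset (Set.finite_Iio ⌈Real.exp (R' * lam)⌉₊)
    intro n hn
    simp only [Function.mem_support] at hn
    by_cases h1 : 1 ≤ n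
    swap
    · exact absurd (if_neg h1) hn
    rw [if_pos h1] at hn
    have hG0 : G (Real.log n / lam) ≠ 0 := by
      intro h; exact hn (by rw [h, mul_zero])
    have hlt : Real.log n / lam < R' := by
      by_contra hge
      exact hG0 (hGzero _ (le_of_not_gt hge))
    have hlog : Real.log n < R' * lam := (div_lt_iff₀ hlam).mp hlt
    have hn0 : (0:ℝ) < n := by exact_mod_cast h1
    have hexp : (n:ℝ) < Real.exp (R' * lam) := (Real.log_lt_iff_lt_exp hn0).mp hlog
    exact Set.mem_Iio.mpr (Nat.lt_ceil.mpr hexp)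
  -- Goal 2 : integrability of the contour integrand
  have goal2 : MeasureTheory.Integrable (fun t : ℝ =>
      DirichletCharacter.LFunction χ (s + c + t * I) *
        Fhat (-(I * (c + t * I)) * lam / (2 * π)) / (c + t * I)) := by
    have hinteq : (fun t : ℝ => DirichletCharacter.LFunction χ (s + c + t * I) *
        Fhat (-(I * (c + t * I)) * lam / (2 * π)) / (c + t * I))
        = fun t : ℝ => DirichletCharacter.LFunction χ (s + c + t * I) *
          (Φ t / ((c:ℂ) + t * I)) := by
      funext t
      rw [hHhat t, mul_div_assoc]
    rw [hinteq]
    apply Integrable.mono' (hΨi.norm.const_mul M)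
    · exact (hLcont.mul (hΦc.div hwcont hwne)).aestronglyMeasurable
    · filter_upwards with t
      rw [norm_mul]
      exact mul_le_mul_of_nonneg_right (hLbound t) (norm_nonneg _)
  -- Goal 3 : the main identity
  have goal3 : (∑' n : ℕ,
      if 1 ≤ n then χ ((n : ZMod q)) * (n : ℂ) ^ (-s) * G (Real.log n / lam)
      else 0) =
      (1 / (2 * (π : ℂ))) * ∫ t : ℝ,
        DirichletCharacter.LFunction χ (s + c + t * I) *
          Fhat (-(I * (c + t * I)) * lam / (2 * π)) / (c + t * I) := by
    calc (∑' n : ℕ,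
        if 1 ≤ n then χ ((n : ZMod q)) * (n : ℂ) ^ (-s) * G (Real.log n / lam) else 0)
        = ∑' n : ℕ, (1 / (2 * (π:ℂ))) * ∫ t : ℝ, g n t := tsum_congr hA
      _ = (1 / (2 * (π:ℂ))) * ∑' n : ℕ, ∫ t : ℝ, g n t := tsum_mul_left
      _ = (1 / (2 * (π:ℂ))) * ∫ t : ℝ, ∑' n : ℕ, g n t := by
          rw [integral_tsum_of_summable_integral_norm hgint hgsum]
      _ = (1 / (2 * (π : ℂ))) * ∫ t : ℝ,
          DirichletCharacter.LFunction χ (s + c + t * I) *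
            Fhat (-(I * (c + t * I)) * lam / (2 * π)) / (c + t * I) := by
          congr 1
          apply integral_congr_ae
          filter_upwards with t
          rw [hpt t, hHhat t]
  exact ⟨goal1, goal2, goal3⟩
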